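/- Let l > 0 and M > 0, and define p(r) = r^3 - l^2 r - 2M l^2. Then p has exactly one root in the interval (0, ∞), and this root r_+ satisfies r_+ > l. -/
import Mathlib

/-- For `l > 0`, `M > 0`, the cubic `p(r) = r^3 - l^2 r - 2 M l^2` has exactly one
root in `(0, ∞)`, and this root is `> l`. -/
theorem unique_positive_root (l M : ℝ) (hl : 0 < l) (hM : 0 < M)
    (p : ℝ → ℝ) (hp : ∀ r, p r = r ^ 3 - l ^ 2 * r - 2 * M * l ^ 2) :
    (∃! r : ℝ, 0 < r ∧ p r = 0) ∧ ∀ r : ℝ, 0 < r → p r = 0 → l < r := by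
  have hneg : ∀ r : ℝ, 0 < r → r ≤ l → p r < 0 := by
    intro r hr hrl; rw [hp]
    nlinarith [mul_nonneg (mul_nonneg hr.le (sub_nonneg.2 hrl)) (by linarith : (0:ℝ) ≤ l + r), mul_pos hM (mul_pos hl hl)]
  have hgt : ∀ r : ℝ, 0 < r → p r = 0 → l < r := by
    intro r hr hpr
    by_contra h
    push_neg at h
    have := hneg r hr h
    linarith [hpr ▸ this]
  have hcont : Continuous p := by
    have : p = fun r => r ^ 3 - l ^ 2 * r - 2 * M * l ^ 2 := funext hp
    rw [this]; continuity
  have hpl : p l < 0 := hneg l hl le_rfl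
  have hpb : 0 < p (2 * l + 2 * M) := by
    rw [hp]
    nlinarith [mul_pos (mul_pos hl hl) hl, mul_pos (mul_pos hl hl) hM, mul_pos (mul_pos hl hM) hM, mul_pos (mul_pos hM hM) hM]
  have hmem : (0 : ℝ) ∈ Set.Icc (p l) (p (2 * l + 2 * M)) :=
    ⟨le_of_lt hpl, le_of_lt hpb⟩
  obtain ⟨r, hrI, hr0⟩ := intermediate_value_Icc (by linarith : l ≤ 2 * l + 2 * M)
    hcont.continuousOn hmem
  have hrpos : 0 < r := lt_of_lt_of_le hl (by
    rcases hrI with ⟨h1, _⟩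
    rcases eq_or_lt_of_le h1 with h | h
    · exfalso; rw [← h] at hr0; linarith
    · exact le_of_lt h) |>.trans_le le_rfl
  have huniq : ∀ r1 r2 : ℝ, (0 < r1 ∧ p r1 = 0) → (0 < r2 ∧ p r2 = 0) → r1 = r2 := by
    intro r1 r2 ⟨h1, hp1⟩ ⟨h2, hp2⟩
    have hl1 := hgt r1 h1 hp1
    have hl2 := hgt r2 h2 hp2
    rw [hp] at hp1 hp2
    have key : (r2 - r1) * (r1 ^ 2 + r1 * r2 + r2 ^ 2 - l ^ 2) = 0 := by ring_nf; linarith [hp1, hp2, (by ring : (r2 - r1) * (r1 ^ 2 + r1 * r2 + r2 ^ 2 - l ^ 2) = (r2 ^ 3 - l ^ 2 * r2 - 2 * M * l ^ 2) - (r1 ^ 3 - l ^ 2 * r1 - 2 * M * l ^ 2))]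
    have hfac : 0 < r1 ^ 2 + r1 * r2 + r2 ^ 2 - l ^ 2 := by nlinarith [mul_pos h1 h2]
    have := mul_eq_zero.1 key
    rcases this with h | h
    · linarith
    · linarith
  refine ⟨⟨r, ⟨hrpos, hr0⟩, fun y hy => huniq y r hy ⟨hrpos, hr0⟩⟩, hgt⟩
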